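/- arXiv:math/0206163 — 2 statements merged into one kernel-verified Lean document; each statement's English description precedes it below -/
import Mathlib

section
/- Let n ≥ 2 and let G be a subgroup of the symmetric group S_n acting on Ω = {1,…,n}. If 1 ≤ t ≤ n/2 and G is t-homogeneous (i.e., G acts transitively on the t-element subsets of Ω), then G is also (t−1)-homogeneous (transitive on the (t−1)-element subsets of Ω). -/
open Finset

private def upF {n : ℕ} (f : Finset (Fin n) → ℚ) (T : Finset (Fin n)) : ℚ :=
  ∑ x ∈ T, f (T.erase x)

private def downF {n : ℕ} (f : Finset (Fin n) → ℚ) (A : Finset (Fin n)) : ℚ :=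
  ∑ x ∈ Aᶜ, f (insert x A)

private def lsum {n : ℕ} (k : ℕ) (f g : Finset (Fin n) → ℚ) : ℚ :=
  ∑ A ∈ univ.filter (fun A : Finset (Fin n) => A.card = k), f A * g A

private lemma adjLW {n : ℕ} (k : ℕ) (f g : Finset (Fin n) → ℚ) :
    lsum (k+1) (upF f) g = lsum k f (downF g) := by
  unfold lsum upF downF
  simp only [Finset.sum_mul, Finset.mul_sum]
  rw [Finset.sum_sigma', Finset.sum_sigma']
  refine Finset.sum_nbij' (fun p => ⟨p.1.erase p.2, p.2⟩) (fun p => ⟨insert p.2 p.1, p.2⟩)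
    ?_ ?_ ?_ ?_ ?_
  · rintro ⟨T, x⟩ hp
    simp only [Finset.mem_sigma, Finset.mem_filter, Finset.mem_univ, true_and] at hp ⊢
    obtain ⟨hT, hx⟩ := hp
    constructor
    · rw [Finset.card_erase_of_mem hx, hT]; rfl
    · simp [Finset.mem_erase] -- x ∈ (T.erase x)ᶜ
  · rintro ⟨A, x⟩ hp
    simp only [Finset.mem_sigma, Finset.mem_filter, Finset.mem_univ, true_and,
      Finset.mem_compl] at hp ⊢
    obtain ⟨hA, hx⟩ := hp
    constructor
    · rw [Finset.card_insert_of_notMem hx, hA]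
    · exact Finset.mem_insert_self _ _
  · rintro ⟨T, x⟩ hp
    simp only [Finset.mem_sigma, Finset.mem_filter, Finset.mem_univ, true_and] at hp
    simp [Finset.insert_erase hp.2]
  · rintro ⟨A, x⟩ hp
    simp only [Finset.mem_sigma, Finset.mem_filter, Finset.mem_univ, true_and,
      Finset.mem_compl] at hp
    simp [Finset.erase_insert hp.2]
  · rintro ⟨T, x⟩ hp
    simp only [Finset.mem_sigma, Finset.mem_filter, Finset.mem_univ, true_and] at hp
    simp [Finset.insert_erase hp.2]

private lemma commLW {n : ℕ} (k : ℕ) (f : Finset (Fin n) → ℚ) (A : Finset (Fin n))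
    (hA : A.card = k) :
    downF (upF f) A = upF (downF f) A + (((n - k : ℕ) : ℚ) - (k : ℚ)) * f A := by
  have hcompl : Aᶜ.card = n - k := by
    rw [Finset.card_compl, Fintype.card_fin, hA]
  unfold upF downF
  have hL : ∀ x ∈ Aᶜ, ∑ y ∈ insert x A, f ((insert x A).erase y)
      = f A + ∑ y ∈ A, f (insert x (A.erase y)) := by
    intro x hx
    rw [Finset.mem_compl] at hx
    rw [Finset.sum_insert hx, Finset.erase_insert hx]
    congr 1
    refine Finset.sum_congr rfl (fun y hy => ?_)
    have hxy : x ≠ y := fun h => hx (h ▸ hy)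
    rw [Finset.erase_insert_of_ne hxy]
  have hR : ∀ y ∈ A, ∑ x ∈ (A.erase y)ᶜ, f (insert x (A.erase y))
      = f A + ∑ x ∈ Aᶜ, f (insert x (A.erase y)) := by
    intro y hy
    rw [Finset.compl_erase, Finset.sum_insert (by simp [hy]), Finset.insert_erase hy]
  rw [Finset.sum_congr rfl hL, Finset.sum_congr rfl hR, Finset.sum_add_distrib,
    Finset.sum_add_distrib, Finset.sum_const, Finset.sum_const, hcompl, hA,
    Finset.sum_comm]
  ring

private lemma keyLW {n : ℕ} (k : ℕ) (hk1 : 1 ≤ k) (hkn : 2 * k < n)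
    (f : Finset (Fin n) → ℚ)
    (hu : ∀ T : Finset (Fin n), T.card = k + 1 → upF f T = 0) :
    ∀ A : Finset (Fin n), A.card = k → f A = 0 := by
  have hzero : lsum (k+1) (upF f) (upF f) = 0 := by
    refine Finset.sum_eq_zero (fun T hT => ?_)
    rw [Finset.mem_filter] at hT
    rw [hu T hT.2]; ring
  rw [adjLW] at hzero
  have hstep : lsum k f (downF (upF f))
      = lsum k (upF (downF f)) f + (((n - k : ℕ) : ℚ) - (k : ℚ)) * lsum k f f := by
    unfold lsum
    rw [Finset.mul_sum, ← Finset.sum_add_distrib]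
    refine Finset.sum_congr rfl (fun A hA => ?_)
    rw [Finset.mem_filter] at hA
    rw [commLW k f A hA.2]
    ring
  have hadj2 : lsum k (upF (downF f)) f = lsum (k-1) (downF f) (downF f) := by
    have : k = (k - 1) + 1 := (Nat.succ_pred_eq_of_pos hk1).symm
    conv_lhs => rw [this, adjLW]
  rw [hstep, hadj2] at hzero
  have hc : 0 < ((n - k : ℕ) : ℚ) - (k : ℚ) := by
    have : k < n - k := by omega
    have := (Nat.cast_lt (α := ℚ)).mpr this
    linarith
  have h1 : 0 ≤ lsum (k-1) (downF f) (downF f) :=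
    Finset.sum_nonneg (fun A _ => mul_self_nonneg _)
  have h2 : 0 ≤ lsum k f f := Finset.sum_nonneg (fun A _ => mul_self_nonneg _)
  have hff : lsum k f f = 0 := by nlinarith
  intro A hA
  have := (Finset.sum_eq_zero_iff_of_nonneg
    (fun A _ => mul_self_nonneg (f A))).mp hff A
    (by simp [Finset.mem_filter, hA])
  nlinarith [this]


open Classical in
private noncomputable def indQ (P : Prop) : ℚ := if P then 1 else 0

private lemma indQ_nonneg (P : Prop) : 0 ≤ indQ P := by
  unfold indQ; split <;> norm_num

private lemma indQ_pos {P : Prop} (h : P) : indQ P = 1 := by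
  unfold indQ; exact if_pos h

private lemma indQ_neg {P : Prop} (h : ¬ P) : indQ P = 0 := by
  unfold indQ; exact if_neg h

private lemma indQ_congr {P Q : Prop} (h : P ↔ Q) : indQ P = indQ Q := by
  unfold indQ
  by_cases hP : P
  · rw [if_pos hP, if_pos (h.mp hP)]
  · rw [if_neg hP, if_neg (fun hq => hP (h.mpr hq))]

set_option maxHeartbeats 1000000 in
/-- **Livingstone–Wagner.** Let `n ≥ 2` and let `G` be a subgroup of the symmetric group
on `Ω = Fin n`. If `1 ≤ t ≤ n/2` and `G` is `t`-homogeneous (transitive on `t`-element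
subsets of `Ω`), then `G` is `(t-1)`-homogeneous. -/
theorem livingstone_wagner (n t : ℕ) (hn : 2 ≤ n) (ht : 1 ≤ t) (htn : 2 * t ≤ n)
    (G : Subgroup (Equiv.Perm (Fin n)))
    (hG : ∀ A B : Finset (Fin n), A.card = t → B.card = t →
      ∃ g ∈ G, A.image (⇑g) = B) :
    ∀ A B : Finset (Fin n), A.card = t - 1 → B.card = t - 1 →
      ∃ g ∈ G, A.image (⇑g) = B := by
  classical
  intro A B hA hB
  rcases eq_or_lt_of_le ht with h1 | h2
  · -- t = 1
    have hA0 : A = ∅ := Finset.card_eq_zero.mp (by omega)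
    have hB0 : B = ∅ := Finset.card_eq_zero.mp (by omega)
    exact ⟨1, G.one_mem, by simp [hA0, hB0]⟩
  by_contra hcon
  push_neg at hcon
  set k := t - 1 with hk
  have hk1 : 1 ≤ k := by omega
  have hkn : 2 * k < n := by omega
  have hkt : k + 1 = t := by omega
  -- image-erase helper
  have himg : ∀ (g : Equiv.Perm (Fin n)) (S : Finset (Fin n)) (x : Fin n),
      (S.image (⇑g)).erase (g x) = (S.erase x).image (⇑g) := by
    intro g S x
    exact (Finset.image_erase g.injective S x).symm
  -- every t-set contains an orbit-representative of any (t-1)-set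
  have hhit : ∀ C : Finset (Fin n), C.card = t - 1 → ∀ T : Finset (Fin n), T.card = t →
      ∃ x ∈ T, ∃ g ∈ G, C.image (⇑g) = T.erase x := by
    intro C hC T hT
    obtain ⟨TC, hsub, hTC⟩ := Finset.exists_superset_card_eq (s := C) (n := t)
      (by omega) (by simp; omega)
    obtain ⟨g, hg, hgT⟩ := hG TC T hTC hT
    have hsub' : C.image (⇑g) ⊆ T := hgT ▸ Finset.image_subset_image hsub
    have hcard' : (C.image (⇑g)).card = t - 1 := by
      rw [Finset.card_image_of_injective _ g.injective, hC]
    have hne : (T \ C.image (⇑g)).Nonempty := by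
      rw [← Finset.card_pos, Finset.card_sdiff_of_subset hsub', hT, hcard']; omega
    obtain ⟨x, hx⟩ := hne
    rw [Finset.mem_sdiff] at hx
    refine ⟨x, hx.1, g, hg, ?_⟩
    refine Finset.eq_of_subset_of_card_le ?_ ?_
    · intro y hy
      exact Finset.mem_erase.mpr ⟨fun h => hx.2 (h ▸ hy), hsub' hy⟩
    · rw [Finset.card_erase_of_mem hx.1, hT, hcard']
  -- counting sums
  set PA : Finset (Fin n) → Prop := fun S => ∃ g ∈ G, A.image (⇑g) = S with hPA
  set PB : Finset (Fin n) → Prop := fun S => ∃ g ∈ G, B.image (⇑g) = S with hPB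
  -- transport of orbit membership
  have htrans : ∀ (P : Finset (Fin n) → Prop) (C : Finset (Fin n)),
      P = (fun S => ∃ g ∈ G, C.image (⇑g) = S) →
      ∀ h ∈ G, ∀ S, P S → P (S.image (⇑h)) := by
    rintro P C rfl h hh S ⟨g, hg, rfl⟩
    exact ⟨h * g, G.mul_mem hh hg, by rw [Equiv.Perm.coe_mul, Finset.image_image]⟩
  -- constancy of counting sums over t-sets
  have hcnt : ∀ (P : Finset (Fin n) → Prop) (C : Finset (Fin n)),
      P = (fun S => ∃ g ∈ G, C.image (⇑g) = S) →
      ∀ T T' : Finset (Fin n), T.card = t → T'.card = t →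
      (∑ x ∈ T, indQ (P (T.erase x)))
        = ∑ x ∈ T', indQ (P (T'.erase x)) := by
    intro P C hP T T' hT hT'
    obtain ⟨h, hh, hhT⟩ := hG T T' hT hT'
    refine Finset.sum_nbij' (fun x => h x) (fun y => h⁻¹ y) ?_ ?_ ?_ ?_ ?_
    · intro x hx
      rw [← hhT]; exact Finset.mem_image_of_mem _ hx
    · intro y hy
      have : T = T'.image (⇑h⁻¹) := by
        rw [← hhT, Finset.image_image]
        ext z; simp
      rw [this]; exact Finset.mem_image_of_mem _ hy
    · intro x _; simp
    · intro y _; simp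
    · intro x hx
      have e : T'.erase (h x) = (T.erase x).image (⇑h) := by rw [← hhT, himg]
      refine indQ_congr ⟨?_, ?_⟩
      · intro hPx
        rw [e]; exact htrans P C hP h hh _ hPx
      · intro hPy
        have := htrans P C hP h⁻¹ (G.inv_mem hh) _ hPy
        rw [e, Finset.image_image] at this
        have e2 : Finset.image (⇑h⁻¹ ∘ ⇑h) (T.erase x) = T.erase x := by
          ext z; simp
        rwa [e2] at this
  -- a base t-set
  obtain ⟨T₀, _, hT₀⟩ := Finset.exists_subset_card_eq (s := (Finset.univ : Finset (Fin n))) (n := t)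
    (by simp; omega)
  set a : ℚ := ∑ x ∈ T₀, indQ (PA (T₀.erase x)) with ha
  set b : ℚ := ∑ x ∈ T₀, indQ (PB (T₀.erase x)) with hb
  have ha1 : 1 ≤ a := by
    obtain ⟨x, hx, g, hg, hgA⟩ := hhit A hA T₀ hT₀
    have h1 : indQ (PA (T₀.erase x)) = 1 := indQ_pos ⟨g, hg, hgA⟩
    calc (1 : ℚ) = _ := h1.symm
    _ ≤ a := Finset.single_le_sum (fun x _ => indQ_nonneg _) hx
  have hb1 : 1 ≤ b := by
    obtain ⟨x, hx, g, hg, hgB⟩ := hhit B hB T₀ hT₀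
    have h1 : indQ (PB (T₀.erase x)) = 1 := indQ_pos ⟨g, hg, hgB⟩
    calc (1 : ℚ) = _ := h1.symm
    _ ≤ b := Finset.single_le_sum (fun x _ => indQ_nonneg _) hx
  -- the test function
  set f : Finset (Fin n) → ℚ :=
    fun S => b * indQ (PA S) - a * indQ (PB S) with hf
  have hup : ∀ T : Finset (Fin n), T.card = k + 1 → upF f T = 0 := by
    intro T hT
    rw [hkt] at hT
    unfold upF
    simp only [hf]
    rw [Finset.sum_sub_distrib, ← Finset.mul_sum, ← Finset.mul_sum,
      hcnt PA A hPA T T₀ hT hT₀, hcnt PB B hPB T T₀ hT hT₀, ← ha, ← hb]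
    ring
  have hfA : f A = b := by
    simp only [hf]
    have h1 : PA A := ⟨1, G.one_mem, by simp⟩
    have h2 : ¬ PB A := by
      rintro ⟨g, hg, hgB⟩
      refine hcon g⁻¹ (G.inv_mem hg) ?_
      rw [← hgB, Finset.image_image]
      ext z; simp
    rw [indQ_pos h1, indQ_neg h2]; ring
  have hzero := keyLW k hk1 hkn f hup A (by omega)
  rw [hfA] at hzero
  linarith
end

section
/- Let n ≥ 2 and let λ and μ be partitions of n with μ ⊵ λ. If D ⊆ S_n is a λ-transitive set of permutations, then D is a μ-transitive set. -/
open scoped Pointwise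

/-- `P` is an ordered set partition of `Ω = Fin n`: a list of pairwise disjoint
nonempty subsets of `Fin n` whose union is all of `Fin n`. -/
def IsOSP (n : ℕ) (P : List (Finset (Fin n))) : Prop :=
  P.Pairwise Disjoint ∧ (∀ s ∈ P, s.Nonempty) ∧ P.foldr (· ∪ ·) ∅ = Finset.univ

/-- `l` is an integer partition of `n`: a weakly decreasing list of positive
integers summing to `n`. -/
def IsPartition (n : ℕ) (l : List ℕ) : Prop :=
  l.Pairwise (· ≥ ·) ∧ (∀ x ∈ l, 0 < x) ∧ l.sum = n

/-- The permutation `g` maps the ordered set partition `P` to `Q`, i.e. `g Pᵢ = Qᵢ`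
for all `i` (in particular the lists have the same length). -/
def MapsOSP {n : ℕ} (g : Equiv.Perm (Fin n)) (P Q : List (Finset (Fin n))) : Prop :=
  List.Forall₂ (fun s t => s.image g = t) P Q

/-- Dominance order on partitions: `Dominance l m` means `l ⊴ m`. -/
def Dominated (l m : List ℕ) : Prop :=
  ∀ j : ℕ, ((l.take j).sum ≤ (m.take j).sum)

/-- A subgroup `G ≤ S_n` is `λ`-transitive if any ordered set partition of shape `λ`
can be mapped to any other by some element of `G`. -/
def IsLamTransGroup {n : ℕ} (G : Subgroup (Equiv.Perm (Fin n))) (lam : List ℕ) : Prop :=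
  ∀ P Q : List (Finset (Fin n)), IsOSP n P → IsOSP n Q →
    P.map Finset.card = lam → Q.map Finset.card = lam → ∃ g ∈ G, MapsOSP g P Q

/-- A set `D ⊆ S_n` is `λ`-transitive if there is a constant `r` such that for any
two ordered set partitions `P, Q` of shape `λ`, exactly `r` elements of `D` map `P` to `Q`. -/
def IsLamTransSet {n : ℕ} (D : Set (Equiv.Perm (Fin n))) (lam : List ℕ) : Prop :=
  ∃ r : ℕ, ∀ P Q : List (Finset (Fin n)), IsOSP n P → IsOSP n Q →
    P.map Finset.card = lam → Q.map Finset.card = lam →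
      {g ∈ D | MapsOSP g P Q}.ncard = r

/-- The Young subgroup of the ordered set partition `P`: all permutations fixing
each block of `P` setwise. -/
def YoungSubgroup {n : ℕ} (P : List (Finset (Fin n))) : Subgroup (Equiv.Perm (Fin n)) where
  carrier := {g | ∀ s ∈ P, s.image g = s}
  one_mem' := by intro s hs; simp
  mul_mem' := by
    intro a b ha hb s hs
    have : ⇑(a * b) = ⇑a ∘ ⇑b := rfl
    rw [this, ← Finset.image_image, hb s hs, ha s hs]
  inv_mem' := by
    intro a ha s hs
    have h1 : s.image ⇑a = s := ha s hs
    conv_lhs => rw [← h1]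
    rw [Finset.image_image]
    have : (⇑a⁻¹ ∘ ⇑a) = id := by
      funext x
      simp
    rw [this, Finset.image_id]


open Finset

variable {α : Type*} [DecidableEq α]

lemma card_filter_powersetCard_succ (X A : Finset α) (hAX : A ⊆ X) :
    ((X.powersetCard (A.card + 1)).filter (fun B => A ⊆ B)).card = X.card - A.card := by
  classical
  have himg : ((X.powersetCard (A.card + 1)).filter (fun B => A ⊆ B))
      = (X \ A).image (fun x => insert x A) := by
    ext B
    simp only [mem_filter, mem_powersetCard, mem_image, mem_sdiff]
    constructor
    · rintro ⟨⟨hBX, hBcard⟩, hAB⟩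
      have hne : (B \ A).Nonempty := by
        rw [← Finset.card_pos, Finset.card_sdiff_of_subset hAB, hBcard]
        omega
      obtain ⟨x, hx⟩ := hne
      rw [mem_sdiff] at hx
      refine ⟨x, ⟨hBX hx.1, hx.2⟩, ?_⟩
      apply Finset.eq_of_subset_of_card_le
      · exact Finset.insert_subset hx.1 hAB
      · rw [hBcard, Finset.card_insert_of_notMem hx.2]
    · rintro ⟨x, ⟨hxX, hxA⟩, rfl⟩
      exact ⟨⟨Finset.insert_subset hxX hAX, by rw [Finset.card_insert_of_notMem hxA]⟩,
        Finset.subset_insert _ _⟩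
  rw [himg, Finset.card_image_of_injOn, Finset.card_sdiff_of_subset hAX]
  intro x hx y hy hxy
  simp only [mem_coe, mem_sdiff] at hx hy
  have hx' : x ∈ insert y A := by
    have : x ∈ insert x A := Finset.mem_insert_self x A
    simpa [hxy] using this
  rcases Finset.mem_insert.1 hx' with h | h
  · exact h
  · exact absurd h hx.2

lemma sum_neg_one_pow_card (A : Finset α) :
    ∑ B ∈ A.powerset, (-1 : ℚ) ^ B.card = if A = ∅ then 1 else 0 := by
  have h := Finset.sum_powerset_neg_one_pow_card (x := A)
  have h2 : ((∑ B ∈ A.powerset, (-1 : ℤ) ^ B.card : ℤ) : ℚ)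
      = ∑ B ∈ A.powerset, (-1 : ℚ) ^ B.card := by push_cast; rfl
  rw [← h2, h]
  split <;> simp

lemma swap_sum (U : Finset α) (t : ℕ) (ν : Finset α → ℚ) (A : Finset α) (hAU : A ⊆ U)
    (hAt : A.card < t) :
    ∑ B ∈ (U.powersetCard (A.card + 1)).filter (fun B => A ⊆ B),
        (∑ T ∈ (U.powersetCard t).filter (fun T => B ⊆ T), ν T)
      = ((t - A.card : ℕ) : ℚ) *
        ∑ T ∈ (U.powersetCard t).filter (fun T => A ⊆ T), ν T := by
  classical
  set F1 := (U.powersetCard (A.card + 1)).filter (fun B => A ⊆ B) with hF1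
  calc ∑ B ∈ F1, (∑ T ∈ (U.powersetCard t).filter (fun T => B ⊆ T), ν T)
      = ∑ B ∈ F1, ∑ T ∈ U.powersetCard t, if B ⊆ T then ν T else 0 := by
        refine Finset.sum_congr rfl fun B _ => ?_
        rw [Finset.sum_filter]
    _ = ∑ T ∈ U.powersetCard t, ∑ B ∈ F1, if B ⊆ T then ν T else 0 := Finset.sum_comm
    _ = ∑ T ∈ U.powersetCard t, ((F1.filter (fun B => B ⊆ T)).card : ℚ) * ν T := by
        refine Finset.sum_congr rfl fun T _ => ?_
        rw [← Finset.sum_filter, Finset.sum_const, nsmul_eq_mul]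
    _ = ∑ T ∈ U.powersetCard t, (if A ⊆ T then ((t - A.card : ℕ) : ℚ) else 0) * ν T := by
        refine Finset.sum_congr rfl fun T hT => ?_
        rw [Finset.mem_powersetCard] at hT
        congr 1
        by_cases hA : A ⊆ T
        · rw [if_pos hA]
          have : F1.filter (fun B => B ⊆ T) = (T.powersetCard (A.card + 1)).filter (fun B => A ⊆ B) := by
            ext B
            simp only [hF1, mem_filter, mem_powersetCard]
            constructor
            · rintro ⟨⟨⟨_, hc⟩, hab⟩, hbt⟩
              exact ⟨⟨hbt, hc⟩, hab⟩
            · rintro ⟨⟨hbt, hc⟩, hab⟩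
              exact ⟨⟨⟨hbt.trans hT.1, hc⟩, hab⟩, hbt⟩
          rw [this, card_filter_powersetCard_succ T A hA, hT.2]
        · rw [if_neg hA]
          norm_cast
          rw [Finset.card_eq_zero, Finset.filter_eq_empty_iff]
          intro B hB hBT
          rw [hF1, mem_filter] at hB
          exact hA (hB.2.trans hBT)
    _ = ((t - A.card : ℕ) : ℚ) * ∑ T ∈ (U.powersetCard t).filter (fun T => A ⊆ T), ν T := by
        rw [Finset.mul_sum, Finset.sum_filter]
        refine Finset.sum_congr rfl fun T _ => ?_
        split <;> simp

lemma lemA (U : Finset α) (t : ℕ) (ht1 : 1 ≤ t) (htU : t ≤ U.card) (h2 : U.card < 2 * t)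
    (ν : Finset α → ℚ) (c : ℚ)
    (h : ∀ S ⊆ U, S.card = t - 1 →
      ∑ T ∈ (U.powersetCard t).filter (fun T => S ⊆ T), ν T = c) :
    ∀ T ⊆ U, T.card = t → ((U.card - t + 1 : ℕ) : ℚ) * ν T = c := by
  classical
  set m := U.card with hm
  set σ : Finset α → ℚ := fun A => ∑ T ∈ (U.powersetCard t).filter (fun T => A ⊆ T), ν T
    with hσ
  -- the sequence of constants
  let e : ℕ → ℚ := fun d => Nat.rec c
    (fun d ed => (((m - t) + d + 2 : ℕ) : ℚ) / ((d + 2 : ℕ) : ℚ) * ed) d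
  -- σ is constant on subsets of card t-1-d
  have const : ∀ d, d ≤ t - 1 → ∀ A ⊆ U, A.card = t - 1 - d → σ A = e d := by
    intro d
    induction d with
    | zero => intro _ A hAU hAc; exact h A hAU (by simpa using hAc)
    | succ d ih =>
      intro hd A hAU hAc
      have hdt : d + 2 ≤ t := by omega
      have hs : A.card + (d + 2) = t := by omega
      have hswap := swap_sum U t ν A hAU (by omega)
      have hBcard : ∀ B ∈ (U.powersetCard (A.card + 1)).filter (fun B => A ⊆ B),
          σ B = e d := by
        intro B hB
        rw [mem_filter, mem_powersetCard] at hB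
        exact ih (by omega) B hB.1.1 (by omega)
      have hsum : ∑ B ∈ (U.powersetCard (A.card + 1)).filter (fun B => A ⊆ B), σ B
          = (((U.powersetCard (A.card + 1)).filter (fun B => A ⊆ B)).card : ℚ) * e d := by
        rw [Finset.sum_congr rfl hBcard, Finset.sum_const, nsmul_eq_mul]
      have hcardF : ((U.powersetCard (A.card + 1)).filter (fun B => A ⊆ B)).card
          = m - A.card := card_filter_powersetCard_succ U A hAU
      have hAm : A.card ≤ m := Finset.card_le_card hAU
      have e1 : ((t - A.card : ℕ) : ℚ) * σ A = ((m - A.card : ℕ) : ℚ) * e d := by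
        rw [← hswap, hsum, hcardF]
      have ht' : (t - A.card : ℕ) = d + 2 := by omega
      have hm' : (m - A.card : ℕ) = (m - t) + d + 2 := by omega
      rw [ht', hm'] at e1
      have hne : ((d + 2 : ℕ) : ℚ) ≠ 0 := by positivity
      show σ A = (((m - t) + d + 2 : ℕ) : ℚ) / ((d + 2 : ℕ) : ℚ) * e d
      rw [div_mul_eq_mul_div, eq_div_iff hne, mul_comm]
      exact e1
  -- inclusion-exclusion: ν T = alternating sum of σ over subsets of U \ T
  have incl : ∀ T ⊆ U, T.card = t →
      ν T = ∑ B ∈ (U \ T).powerset, (-1 : ℚ) ^ B.card * σ B := by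
    intro T hTU hTc
    have key : ∑ B ∈ (U \ T).powerset, (-1 : ℚ) ^ B.card * σ B
        = ∑ T' ∈ U.powersetCard t,
            (∑ B ∈ ((U \ T) ∩ T').powerset, (-1 : ℚ) ^ B.card) * ν T' := by
      calc ∑ B ∈ (U \ T).powerset, (-1 : ℚ) ^ B.card * σ B
          = ∑ B ∈ (U \ T).powerset, ∑ T' ∈ U.powersetCard t,
              if B ⊆ T' then (-1 : ℚ) ^ B.card * ν T' else 0 := by
            refine Finset.sum_congr rfl fun B _ => ?_
            rw [hσ]
            simp only
            rw [Finset.sum_filter, Finset.mul_sum]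
            refine Finset.sum_congr rfl fun T' _ => ?_
            split <;> simp
        _ = ∑ T' ∈ U.powersetCard t, ∑ B ∈ (U \ T).powerset,
              if B ⊆ T' then (-1 : ℚ) ^ B.card * ν T' else 0 := Finset.sum_comm
        _ = _ := by
            refine Finset.sum_congr rfl fun T' _ => ?_
            rw [← Finset.sum_filter]
            have : (U \ T).powerset.filter (fun B => B ⊆ T') = ((U \ T) ∩ T').powerset := by
              ext B
              simp only [mem_filter, mem_powerset, Finset.subset_inter_iff]
            rw [this, Finset.sum_mul]
    rw [key]
    have hone : ∀ T' ∈ U.powersetCard t,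
        (∑ B ∈ ((U \ T) ∩ T').powerset, (-1 : ℚ) ^ B.card) * ν T'
          = if T' = T then ν T else 0 := by
      intro T' hT'
      rw [mem_powersetCard] at hT'
      rw [sum_neg_one_pow_card]
      by_cases hEq : T' = T
      · subst hEq
        rw [if_pos (by simp [Finset.sdiff_inter_self]), if_pos rfl, one_mul]
      · rw [if_neg, if_neg hEq, zero_mul]
        intro hEmpty
        have hsub : T' ⊆ T := by
          intro x hx
          by_contra hxT
          have : x ∈ (U \ T) ∩ T' := by
            rw [mem_inter, mem_sdiff]
            exact ⟨⟨hT'.1 hx, hxT⟩, hx⟩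
          rw [hEmpty] at this
          exact absurd this (Finset.notMem_empty x)
        exact hEq (Finset.eq_of_subset_of_card_le hsub (by rw [hT'.2, hTc]))
    rw [Finset.sum_congr rfl hone, Finset.sum_ite_eq' (U.powersetCard t) T fun _ => ν T]
    rw [if_pos (by rw [mem_powersetCard]; exact ⟨hTU, hTc⟩)]
  -- ν is constant: its value is an explicit expression depending only on m, t
  have hmt : m - t ≤ t - 1 := by omega
  have nuval : ∀ T ⊆ U, T.card = t →
      ν T = ∑ j ∈ Finset.range ((m - t) + 1),
        ((m - t).choose j : ℚ) * ((-1 : ℚ) ^ j * e (t - 1 - j)) := by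
    intro T hTU hTc
    rw [incl T hTU hTc]
    have hUT : (U \ T).card = m - t := by rw [Finset.card_sdiff_of_subset hTU, hTc]
    have step1 : ∀ B ∈ (U \ T).powerset,
        (-1 : ℚ) ^ B.card * σ B = (-1 : ℚ) ^ B.card * e (t - 1 - B.card) := by
      intro B hB
      rw [mem_powerset] at hB
      have hBc : B.card ≤ m - t := by rw [← hUT]; exact Finset.card_le_card hB
      congr 1
      refine const (t - 1 - B.card) (by omega) B (hB.trans (Finset.sdiff_subset)) (by omega)
    rw [Finset.sum_congr rfl step1, Finset.sum_powerset]
    rw [hUT]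
    refine Finset.sum_congr rfl fun j hj => ?_
    have : ∀ B ∈ (U \ T).powersetCard j,
        (-1 : ℚ) ^ B.card * e (t - 1 - B.card) = (-1 : ℚ) ^ j * e (t - 1 - j) := by
      intro B hB
      rw [Finset.mem_powersetCard] at hB
      rw [hB.2]
    rw [Finset.sum_congr rfl this, Finset.sum_const, nsmul_eq_mul,
      Finset.card_powersetCard, hUT]
  -- conclude
  intro T hTU hTc
  obtain ⟨S, hST, hSc⟩ := Finset.exists_subset_card_eq (show t - 1 ≤ T.card by omega)
  have hSU : S ⊆ U := hST.trans hTU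
  have hc := h S hSU hSc
  have hcount : ((U.powersetCard t).filter (fun T' => S ⊆ T')).card = m - t + 1 := by
    have := card_filter_powersetCard_succ U S hSU
    rw [hSc] at this
    have ht' : t - 1 + 1 = t := by omega
    rw [ht'] at this
    rw [this]
    omega
  have hall : ∀ T' ∈ (U.powersetCard t).filter (fun T' => S ⊆ T'), ν T' = ν T := by
    intro T' hT'
    rw [mem_filter, mem_powersetCard] at hT'
    rw [nuval T' hT'.1.1 hT'.1.2, nuval T hTU hTc]
  rw [Finset.sum_congr rfl hall, Finset.sum_const, nsmul_eq_mul, hcount] at hc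
  exact hc

lemma image_equiv_subset_iff {n : ℕ} (g : Equiv.Perm (Fin n)) (S T : Finset (Fin n)) :
    S.image g ⊆ T.image g ↔ S ⊆ T := by
  constructor
  · intro h x hx
    have := h (Finset.mem_image_of_mem g hx)
    rw [Finset.mem_image] at this
    obtain ⟨y, hy, hxy⟩ := this
    rwa [← g.injective hxy]
  · intro h
    exact Finset.image_subset_image h

lemma core {n : ℕ} (G0 : Finset (Equiv.Perm (Fin n))) (U V : Finset (Fin n)) (t : ℕ)
    (hV : V.card = U.card) (ht1 : 1 ≤ t) (htm : t ≤ U.card) (h2t : U.card < 2 * t)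
    (hmap : ∀ g ∈ G0, U.image g = V) (r : ℕ)
    (hr : ∀ S ⊆ U, ∀ W ⊆ V, S.card = t - 1 → W.card = t - 1 →
      (G0.filter fun g : Equiv.Perm (Fin n) => S.image ⇑g = W).card = r) :
    ∀ T ⊆ U, ∀ W ⊆ V, T.card = t → W.card = t →
      (U.card - t + 1) * (G0.filter fun g : Equiv.Perm (Fin n) => T.image ⇑g = W).card = t * r := by
  classical
  intro T hTU W' hWV hTc hWc
  have himgV : ∀ g ∈ G0, V.image ⇑g⁻¹ = U := by
    intro g hg
    rw [← hmap g hg, Finset.image_image]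
    ext x; simp
  have hyp : ∀ S ⊆ U, S.card = t - 1 →
      ∑ T' ∈ (U.powersetCard t).filter (fun T' => S ⊆ T'),
        ((G0.filter fun g : Equiv.Perm (Fin n) => T'.image ⇑g = W').card : ℚ) = ((t * r : ℕ) : ℚ) := by
    intro S hSU hSc
    -- left side: count pairs (T', g)
    have lhs_eq : ∑ T' ∈ (U.powersetCard t).filter (fun T' => S ⊆ T'),
        ((G0.filter fun g : Equiv.Perm (Fin n) => T'.image ⇑g = W').card : ℚ)
        = ((G0.filter fun g : Equiv.Perm (Fin n) => S.image ⇑g ⊆ W').card : ℚ) := by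
      push_cast [Finset.card_filter]
      rw [Finset.sum_comm]
      refine Finset.sum_congr rfl fun g hg => ?_
      -- inner sum over T' equals indicator of S.image g ⊆ W'
      have key : ((U.powersetCard t).filter (fun T' => S ⊆ T')).filter
          (fun T' => T'.image ⇑g = W') = if S.image g ⊆ W' then {W'.image ⇑g⁻¹} else ∅ := by
        ext T'
        simp only [Finset.mem_filter, Finset.mem_powersetCard]
        constructor
        · rintro ⟨⟨⟨hT'U, hT'c⟩, hST'⟩, himg⟩
          have hsub : S.image g ⊆ W' := by rw [← himg]; exact Finset.image_subset_image hST'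
          rw [if_pos hsub, Finset.mem_singleton]
          rw [← himg, Finset.image_image]
          ext x; simp
        · intro hT'
          by_cases hsub : S.image g ⊆ W'
          · rw [if_pos hsub, Finset.mem_singleton] at hT'
            subst hT'
            have h1 : (W'.image ⇑g⁻¹).image g = W' := by
              rw [Finset.image_image]; ext x; simp
            refine ⟨⟨⟨?_, ?_⟩, ?_⟩, h1⟩
            · calc W'.image ⇑g⁻¹ ⊆ V.image ⇑g⁻¹ := Finset.image_subset_image hWV
                _ = U := himgV g hg
            · rw [Finset.card_image_of_injective _ (g⁻¹ : Equiv.Perm (Fin n)).injective, hWc]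
            · rw [← image_equiv_subset_iff g, h1]; exact hsub
          · rw [if_neg hsub] at hT'
            exact absurd hT' (Finset.notMem_empty _)
      rw [← Finset.sum_filter, key]
      split
      · rw [Finset.sum_singleton]
      · rw [Finset.sum_empty]
    -- right side
    have rhs_eq : ((t * r : ℕ) : ℚ)
        = ((G0.filter fun g : Equiv.Perm (Fin n) => S.image ⇑g ⊆ W').card : ℚ) := by
      have h1 : ∀ w ∈ W', (G0.filter fun g : Equiv.Perm (Fin n) => S.image ⇑g = W'.erase w).card = r := by
        intro w hw
        exact hr S hSU (W'.erase w) ((Finset.erase_subset _ _).trans hWV)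
          hSc (by rw [Finset.card_erase_of_mem hw, hWc])
      have h2 : ((t * r : ℕ) : ℚ) = ∑ w ∈ W', ((G0.filter fun g : Equiv.Perm (Fin n) => S.image ⇑g = W'.erase w).card : ℚ) := by
        rw [Finset.sum_congr rfl (fun w hw => by rw [h1 w hw])]
        rw [Finset.sum_const, hWc, nsmul_eq_mul]
        push_cast; ring
      rw [h2]
      push_cast [Finset.card_filter]
      rw [Finset.sum_comm]
      refine Finset.sum_congr rfl fun g hg => ?_
      have hSimgc : (S.image g).card = t - 1 := by
        rw [Finset.card_image_of_injective _ g.injective, hSc]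
      by_cases hsub : S.image g ⊆ W'
      · have hdiffc : (W' \ S.image g).card = 1 := by
          rw [Finset.card_sdiff_of_subset hsub, hSimgc, hWc]; omega
        obtain ⟨w0, hw0⟩ := Finset.card_eq_one.1 hdiffc
        have hw0mem : w0 ∈ W' ∧ w0 ∉ S.image g := by
          have : w0 ∈ W' \ S.image g := by rw [hw0]; exact Finset.mem_singleton_self w0
          rwa [Finset.mem_sdiff] at this
        have hkey : (W'.filter fun w => S.image ⇑g = W'.erase w) = {w0} := by
          ext w
          rw [Finset.mem_filter, Finset.mem_singleton]
          constructor
          · rintro ⟨hwW, heq⟩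
            have : w ∈ W' \ S.image g := by
              rw [Finset.mem_sdiff]
              refine ⟨hwW, ?_⟩
              rw [heq]
              exact Finset.notMem_erase w W'
            rw [hw0] at this
            exact (Finset.mem_singleton.1 this)
          · rintro rfl
            refine ⟨hw0mem.1, ?_⟩
            symm
            apply Finset.eq_of_subset_of_card_le
            · intro x hx
              rw [Finset.mem_erase] at hx
              by_contra hxim
              have : x ∈ W' \ S.image g := Finset.mem_sdiff.2 ⟨hx.2, hxim⟩
              rw [hw0] at this
              exact hx.1 (Finset.mem_singleton.1 this)
            · rw [hSimgc, Finset.card_erase_of_mem hw0mem.1, hWc]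
        rw [← Finset.sum_filter, hkey, Finset.sum_singleton, if_pos hsub]
      · rw [if_neg hsub, ← Finset.sum_filter]
        have : (W'.filter fun w => S.image ⇑g = W'.erase w) = ∅ := by
          rw [Finset.filter_eq_empty_iff]
          intro w hw heq
          exact hsub (heq ▸ Finset.erase_subset _ _)
        rw [this, Finset.sum_empty]
    rw [lhs_eq, rhs_eq]
  have := lemA U t ht1 htm h2t
    (fun T' => ((G0.filter fun g : Equiv.Perm (Fin n) => T'.image ⇑g = W').card : ℚ)) ((t * r : ℕ) : ℚ) hyp T hTU hTc
  exact_mod_cast this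

section Helpers

variable {n : ℕ}

lemma mem_foldr_union (l : List (Finset (Fin n))) (x : Fin n) :
    x ∈ l.foldr (· ∪ ·) ∅ ↔ ∃ k, x ∈ l.getD k ∅ := by
  induction l with
  | nil => simp
  | cons a l ih =>
    simp only [List.foldr_cons, Finset.mem_union, ih]
    constructor
    · rintro (h | ⟨k, hk⟩)
      · exact ⟨0, h⟩
      · exact ⟨k + 1, hk⟩
    · rintro ⟨k, hk⟩
      match k with
      | 0 => exact Or.inl hk
      | k + 1 => exact Or.inr ⟨k, hk⟩

lemma getD_set' {β : Type*} (l : List β) (i k : ℕ) (a d : β) (hi : i < l.length) :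
    (l.set i a).getD k d = if k = i then a else l.getD k d := by
  by_cases h : k = i
  · subst h
    rw [if_pos rfl, List.getD_eq_getElem?_getD, List.getElem?_set_self hi]
    rfl
  · rw [if_neg h, List.getD_eq_getElem?_getD, List.getElem?_set_ne (fun hh => h hh.symm),
      List.getD_eq_getElem?_getD]

lemma getD_concat {β : Type*} (l : List β) (k : ℕ) (a d : β) :
    (l ++ [a]).getD k d = if k = l.length then a else l.getD k d := by
  by_cases h : k = l.length
  · subst h
    rw [if_pos rfl, List.getD_eq_getElem?_getD, List.getElem?_concat_length]
    rfl
  · rw [if_neg h, List.getD_eq_getElem?_getD, List.getD_eq_getElem?_getD]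
    rcases Nat.lt_or_ge k l.length with hk | hk
    · rw [List.getElem?_append]
      rw [if_pos hk]
    · have hk' : l.length < k := lt_of_le_of_ne hk (fun hh => h hh.symm)
      rw [List.getElem?_eq_none (by simp; omega), List.getElem?_eq_none hk]

lemma getD_take {β : Type*} (l : List β) (s k : ℕ) (d : β) (hk : k < s) :
    (l.take s).getD k d = l.getD k d := by
  rcases Nat.lt_or_ge k l.length with h | h
  · rw [List.getD_eq_getElem _ _ (by rw [List.length_take]; omega)]
    rw [List.getElem_take]
    exact (List.getD_eq_getElem _ _ h).symm
  · rw [List.getD_eq_default _ _ (by rw [List.length_take]; omega),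
      List.getD_eq_default _ _ h]

lemma mapsOSP_iff_getD (g : Equiv.Perm (Fin n)) (P Q : List (Finset (Fin n))) :
    MapsOSP g P Q ↔ P.length = Q.length ∧
      ∀ k, (P.getD k ∅).image ⇑g = Q.getD k ∅ := by
  rw [MapsOSP, List.forall₂_iff_get]
  constructor
  · rintro ⟨hlen, hget⟩
    refine ⟨hlen, fun k => ?_⟩
    rcases Nat.lt_or_ge k P.length with hk | hk
    · rw [List.getD_eq_getElem _ _ hk, List.getD_eq_getElem _ _ (hlen ▸ hk)]
      exact hget k hk (hlen ▸ hk)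
    · rw [List.getD_eq_default _ _ hk, List.getD_eq_default _ _ (hlen ▸ hk)]
      simp
  · rintro ⟨hlen, hget⟩
    refine ⟨hlen, fun k h1 h2 => ?_⟩
    have := hget k
    rwa [List.getD_eq_getElem _ _ h1, List.getD_eq_getElem _ _ h2] at this

lemma shape_card {P : List (Finset (Fin n))} {mu : List ℕ}
    (h : P.map Finset.card = mu) (k : ℕ) : (P.getD k ∅).card = mu.getD k 0 := by
  subst h
  rcases Nat.lt_or_ge k P.length with hk | hk
  · rw [List.getD_eq_getElem _ _ hk, List.getD_eq_getElem _ _ (by simpa using hk)]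
    simp
  · rw [List.getD_eq_default _ _ hk, List.getD_eq_default _ _ (by simpa using hk)]
    simp

lemma osp_disjoint {P : List (Finset (Fin n))} (hP : IsOSP n P) {k l : ℕ} (hkl : k ≠ l) :
    Disjoint (P.getD k ∅) (P.getD l ∅) := by
  rcases Nat.lt_or_ge k P.length with hk | hk
  · rcases Nat.lt_or_ge l P.length with hl | hl
    · have hpw := List.pairwise_iff_get.1 hP.1
      rcases Nat.lt_or_ge k l with h | h
      · have := hpw ⟨k, hk⟩ ⟨l, hl⟩ h
        rwa [List.getD_eq_getElem _ _ hk, List.getD_eq_getElem _ _ hl]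
      · have h' : l < k := by omega
        have := (hpw ⟨l, hl⟩ ⟨k, hk⟩ h').symm
        rwa [List.getD_eq_getElem _ _ hk, List.getD_eq_getElem _ _ hl]
    · rw [List.getD_eq_default _ _ hl]; exact Finset.disjoint_empty_right _
  · rw [List.getD_eq_default _ _ hk]; exact Finset.disjoint_empty_left _

/-- characterization of membership in the union of blocks i and s. -/
lemma osp_union_char {P : List (Finset (Fin n))} (hP : IsOSP n P) (i s : ℕ) (x : Fin n) :
    x ∈ P.getD i ∅ ∪ P.getD s ∅ ↔ ∀ k, k ≠ i → k ≠ s → x ∉ P.getD k ∅ := by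
  constructor
  · intro hx k hki hks
    rw [Finset.mem_union] at hx
    intro hxk
    rcases hx with h | h
    · exact Finset.disjoint_left.1 (osp_disjoint hP hki) hxk h
    · exact Finset.disjoint_left.1 (osp_disjoint hP hks) hxk h
  · intro h
    have hx : x ∈ P.foldr (· ∪ ·) ∅ := by rw [hP.2.2]; exact Finset.mem_univ x
    rw [mem_foldr_union] at hx
    obtain ⟨k, hk⟩ := hx
    by_cases hki : k = i
    · subst hki; exact Finset.mem_union_left _ hk
    by_cases hks : k = s
    · subst hks; exact Finset.mem_union_right _ hk
    exact absurd hk (h k hki hks)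

lemma sorted_getD_mono {l : List ℕ} (hl : l.Pairwise (· ≥ ·)) {a b : ℕ} (hab : a ≤ b) :
    l.getD b 0 ≤ l.getD a 0 := by
  rcases Nat.lt_or_ge b l.length with hb | hb
  · have ha : a < l.length := lt_of_le_of_lt hab hb
    rw [List.getD_eq_getElem _ _ hb, List.getD_eq_getElem _ _ ha]
    exact hl.rel_get_of_le (by exact hab)
  · rw [List.getD_eq_default _ _ hb]
    exact Nat.zero_le _

lemma partition_pos {lam : List ℕ} (h : IsPartition n lam) {k : ℕ} (hk : k < lam.length) :
    0 < lam.getD k 0 := by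
  rw [List.getD_eq_getElem _ _ hk]
  exact h.2.1 _ (List.getElem_mem hk)

end Helpers

section Step

variable {n : ℕ}

lemma osp_of_getD (R : List (Finset (Fin n)))
    (hdisj : ∀ k l, k ≠ l → Disjoint (R.getD k ∅) (R.getD l ∅))
    (hne : ∀ k, k < R.length → (R.getD k ∅).Nonempty)
    (hcov : ∀ x : Fin n, ∃ k, x ∈ R.getD k ∅) : IsOSP n R := by
  refine ⟨?_, ?_, ?_⟩
  · rw [List.pairwise_iff_get]
    intro a b hab
    have := hdisj a b (by omega)
    rwa [List.getD_eq_getElem _ _ a.isLt, List.getD_eq_getElem _ _ b.isLt] at this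
  · intro t ht
    rw [List.mem_iff_getElem] at ht
    obtain ⟨k, hk, rfl⟩ := ht
    have := hne k hk
    rwa [List.getD_eq_getElem _ _ hk] at this
  · ext x
    simp only [Finset.mem_univ, iff_true]
    rw [mem_foldr_union]
    exact hcov x

def BoxMove (lam mu : List ℕ) : Prop :=
  ∃ i s p, i < s ∧ mu.getD i 0 = p + 1 ∧
    ((s < mu.length ∧ lam = (mu.set i p).set s (mu.getD s 0 + 1)) ∨
     (s = mu.length ∧ lam = mu.set i p ++ [1]))

lemma step (lam mu : List ℕ) (hlam : IsPartition n lam) (hmu : IsPartition n mu)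
    (hmove : BoxMove lam mu) (D : Set (Equiv.Perm (Fin n))) (hD : IsLamTransSet D lam) :
    IsLamTransSet D mu := by
  classical
  obtain ⟨r, hr⟩ := hD
  obtain ⟨i, s, p, his, hmi, hcase⟩ := hmove
  set q := mu.getD s 0 with hq
  have hslen : s ≤ mu.length := by rcases hcase with ⟨h, _⟩ | ⟨h, _⟩ <;> omega
  have hilen : i < mu.length := lt_of_lt_of_le his hslen
  -- entries of lam at i and s
  have hlam_is : lam.getD i 0 = p ∧ lam.getD s 0 = q + 1 := by
    rcases hcase with ⟨hs, hl⟩ | ⟨hs, hl⟩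
    · constructor
      · rw [hl, getD_set' _ _ _ _ _ (by rw [List.length_set]; exact hs),
          if_neg (by omega), getD_set' _ _ _ _ _ hilen, if_pos rfl]
      · rw [hl, getD_set' _ _ _ _ _ (by rw [List.length_set]; exact hs), if_pos rfl]
    · have hq0 : q = 0 := by rw [hq, List.getD_eq_default _ _ (le_of_eq hs.symm)]
      constructor
      · rw [hl, getD_concat, if_neg (by rw [List.length_set]; omega),
          getD_set' _ _ _ _ _ hilen, if_pos rfl]
      · rw [hl, getD_concat, if_pos (by rw [List.length_set]; omega), hq0]
  have hqp : q + 1 ≤ p := by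
    have := sorted_getD_mono hlam.1 (le_of_lt his)
    rw [hlam_is.1, hlam_is.2] at this
    exact this
  have hp1 : 1 ≤ p := by omega
  -- the key quantitative claim
  have key : ∀ P Q : List (Finset (Fin n)), IsOSP n P → IsOSP n Q →
      P.map Finset.card = mu → Q.map Finset.card = mu →
      (q + 1) * {g ∈ D | MapsOSP g P Q}.ncard = (p + 1) * r := by
    intro P Q hP hQ hPs hQs
    have hPlen : P.length = mu.length := by rw [← hPs, List.length_map]
    have hQlen : Q.length = mu.length := by rw [← hQs, List.length_map]
    set Pi := P.getD i ∅ with hPi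
    set Psb := P.getD s ∅ with hPsb
    set Qi := Q.getD i ∅ with hQi
    set Qsb := Q.getD s ∅ with hQsb
    set U := Pi ∪ Psb with hU
    set V := Qi ∪ Qsb with hV
    have hPicard : Pi.card = p + 1 := by rw [hPi, shape_card hPs i, hmi]
    have hPscard : Psb.card = q := by rw [hPsb, shape_card hPs s, hq]
    have hQicard : Qi.card = p + 1 := by rw [hQi, shape_card hQs i, hmi]
    have hQscard : Qsb.card = q := by rw [hQsb, shape_card hQs s, hq]
    have hdisjP : Disjoint Pi Psb := osp_disjoint hP (Nat.ne_of_lt his)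
    have hdisjQ : Disjoint Qi Qsb := osp_disjoint hQ (Nat.ne_of_lt his)
    have hUcard : U.card = p + 1 + q := by
      rw [hU, Finset.card_union_of_disjoint hdisjP, hPicard, hPscard]
    have hVcard : V.card = p + 1 + q := by
      rw [hV, Finset.card_union_of_disjoint hdisjQ, hQicard, hQscard]
    set G0 := Finset.univ.filter (fun g : Equiv.Perm (Fin n) => g ∈ D ∧
      ∀ k, k ≠ i → k ≠ s → (P.getD k ∅).image ⇑g = Q.getD k ∅) with hG0
    have hmemG0 : ∀ g : Equiv.Perm (Fin n), g ∈ G0 ↔ (g ∈ D ∧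
        ∀ k, k ≠ i → k ≠ s → (P.getD k ∅).image ⇑g = Q.getD k ∅) := by
      intro g; rw [hG0, Finset.mem_filter]; simp
    have hmap : ∀ g ∈ G0, U.image ⇑g = V := by
      intro g hg
      rw [hmemG0] at hg
      obtain ⟨hgD, hgblocks⟩ := hg
      apply Finset.eq_of_subset_of_card_le
      · intro y hy
        rw [Finset.mem_image] at hy
        obtain ⟨x, hx, rfl⟩ := hy
        rw [hV, osp_union_char hQ i s]
        intro k hki hks hyk
        have hxk : x ∈ P.getD k ∅ := by
          rw [← hgblocks k hki hks, Finset.mem_image] at hyk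
          obtain ⟨x', hx', hxx'⟩ := hyk
          rwa [← g.injective hxx']
        exact (osp_union_char hP i s x).1 hx k hki hks hxk
      · rw [Finset.card_image_of_injective _ g.injective, hUcard, hVcard]
    -- the λ-transitivity input, reformulated
    have hrS : ∀ S ⊆ U, ∀ W ⊆ V, S.card = p → W.card = p →
        (G0.filter (fun g : Equiv.Perm (Fin n) => S.image ⇑g = W)).card = r := by
      intro S hSU W hWV hSc hWc
      have hUScard : (U \ S).card = q + 1 := by
        rw [Finset.card_sdiff_of_subset hSU, hUcard, hSc]; omega
      have hVWcard : (V \ W).card = q + 1 := by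
        rw [Finset.card_sdiff_of_subset hWV, hVcard, hWc]; omega
      -- construct the lam-shaped refinements
      obtain ⟨PS, QW, hPSlen, hQWlen, hPSget, hQWget, hPSshape, hQWshape⟩ :
          ∃ PS QW : List (Finset (Fin n)),
            PS.length = lam.length ∧ QW.length = lam.length ∧
            (∀ k, PS.getD k ∅ = if k = i then S else if k = s then U \ S else P.getD k ∅) ∧
            (∀ k, QW.getD k ∅ = if k = i then W else if k = s then V \ W else Q.getD k ∅) ∧
            PS.map Finset.card = lam ∧ QW.map Finset.card = lam := by
        rcases hcase with ⟨hs, hl⟩ | ⟨hs, hl⟩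
        · refine ⟨(P.set i S).set s (U \ S), (Q.set i W).set s (V \ W), ?_, ?_, ?_, ?_, ?_, ?_⟩
          · rw [List.length_set, List.length_set, hPlen, hl, List.length_set, List.length_set]
          · rw [List.length_set, List.length_set, hQlen, hl, List.length_set, List.length_set]
          · intro k
            rw [getD_set' _ _ _ _ _ (by rw [List.length_set, hPlen]; exact hs)]
            by_cases hks : k = s
            · rw [if_pos hks, hks, if_neg (by omega), if_pos rfl]
            · rw [if_neg hks, getD_set' _ _ _ _ _ (by rw [hPlen]; exact hilen), if_neg hks]
          · intro k
            rw [getD_set' _ _ _ _ _ (by rw [List.length_set, hQlen]; exact hs)]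
            by_cases hks : k = s
            · rw [if_pos hks, hks, if_neg (by omega), if_pos rfl]
            · rw [if_neg hks, getD_set' _ _ _ _ _ (by rw [hQlen]; exact hilen), if_neg hks]
          · rw [List.map_set, List.map_set, hPs, hSc, hUScard, hl]
          · rw [List.map_set, List.map_set, hQs, hWc, hVWcard, hl]
        · have hq0 : q = 0 := by rw [hq, List.getD_eq_default _ _ (le_of_eq hs.symm)]
          refine ⟨P.set i S ++ [U \ S], Q.set i W ++ [V \ W], ?_, ?_, ?_, ?_, ?_, ?_⟩
          · simp [hl, hPlen]
          · simp [hl, hQlen]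

          · intro k
            rw [getD_concat]
            by_cases hks : k = s
            · rw [if_pos (by rw [List.length_set, hPlen]; omega), hks, if_neg (by omega),
                if_pos rfl]
            · rw [if_neg (by rw [List.length_set, hPlen]; omega), if_neg hks,
                getD_set' _ _ _ _ _ (by rw [hPlen]; exact hilen)]
          · intro k
            rw [getD_concat]
            by_cases hks : k = s
            · rw [if_pos (by rw [List.length_set, hQlen]; omega), hks, if_neg (by omega),
                if_pos rfl]
            · rw [if_neg (by rw [List.length_set, hQlen]; omega), if_neg hks,
                getD_set' _ _ _ _ _ (by rw [hQlen]; exact hilen)]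
          · rw [List.map_append, List.map_set, hPs, hSc, hl]
            simp [hUScard, hq0]
          · rw [List.map_append, List.map_set, hQs, hWc, hl]
            simp [hVWcard, hq0]
      -- PS and QW are OSPs
      have hSne : S.Nonempty := by rw [← Finset.card_pos, hSc]; omega
      have hUSne : (U \ S).Nonempty := by rw [← Finset.card_pos, hUScard]; omega
      have hWne : W.Nonempty := by rw [← Finset.card_pos, hWc]; omega
      have hVWne : (V \ W).Nonempty := by rw [← Finset.card_pos, hVWcard]; omega
      have hdisjU : ∀ k, k ≠ i → k ≠ s → Disjoint U (P.getD k ∅) := by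
        intro k hki hks
        rw [hU, Finset.disjoint_union_left]
        exact ⟨osp_disjoint hP (fun h => hki h.symm),
          osp_disjoint hP (fun h => hks h.symm)⟩
      have hdisjV : ∀ k, k ≠ i → k ≠ s → Disjoint V (Q.getD k ∅) := by
        intro k hki hks
        rw [hV, Finset.disjoint_union_left]
        exact ⟨osp_disjoint hQ (fun h => hki h.symm),
          osp_disjoint hQ (fun h => hks h.symm)⟩
      have hospPS : IsOSP n PS := by
        apply osp_of_getD
        · intro k l hkl
          rw [hPSget, hPSget]
          split_ifs with h1 h2 h3 h4 h5 h6 h7 h8 <;>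
            first
            | omega
            | exact Finset.disjoint_sdiff
            | exact Finset.disjoint_sdiff.symm
            | exact (Finset.disjoint_of_subset_left (Finset.sdiff_subset) (hdisjU _ (by omega) (by omega)))
            | exact (Finset.disjoint_of_subset_right (Finset.sdiff_subset) (hdisjU _ (by omega) (by omega))).symm
            | exact Finset.disjoint_of_subset_left hSU (hdisjU _ (by omega) (by omega))
            | exact (Finset.disjoint_of_subset_left hSU (hdisjU _ (by omega) (by omega))).symm
            | exact (Finset.disjoint_of_subset_left (Finset.sdiff_subset) (hdisjU _ (by omega) (by omega))).symm
            | exact osp_disjoint hP hkl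
        · intro k hk
          rw [hPSget]
          split_ifs with h1 h2
          · exact hSne
          · exact hUSne
          · apply hP.2.1
            have hklen : k < P.length := by
              rcases hcase with ⟨hs, hl⟩ | ⟨hs, hl⟩
              · rw [hPSlen, hl, List.length_set, List.length_set, ← hPlen] at hk
                exact hk
              · rw [hPSlen, hl, List.length_append, List.length_set, ← hPlen] at hk
                simp at hk
                rcases Nat.lt_or_ge k P.length with h | h
                · exact h
                · exfalso; rw [hPlen] at h; omega
            rw [List.getD_eq_getElem _ _ hklen]
            exact List.getElem_mem hklen
        · intro x
          have hx : x ∈ P.foldr (· ∪ ·) ∅ := by rw [hP.2.2]; exact Finset.mem_univ x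
          rw [mem_foldr_union] at hx
          obtain ⟨k, hk⟩ := hx
          by_cases hki : k = i
          · rw [hki] at hk
            have hxU : x ∈ U := Finset.mem_union_left _ hk
            by_cases hxS : x ∈ S
            · exact ⟨i, by rw [hPSget, if_pos rfl]; exact hxS⟩
            · refine ⟨s, ?_⟩
              rw [hPSget, if_neg (by omega), if_pos rfl]
              exact Finset.mem_sdiff.2 ⟨hxU, hxS⟩
          by_cases hks : k = s
          · rw [hks] at hk
            have hxU : x ∈ U := Finset.mem_union_right _ hk
            by_cases hxS : x ∈ S
            · exact ⟨i, by rw [hPSget, if_pos rfl]; exact hxS⟩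
            · refine ⟨s, ?_⟩
              rw [hPSget, if_neg (by omega), if_pos rfl]
              exact Finset.mem_sdiff.2 ⟨hxU, hxS⟩
          · exact ⟨k, by rw [hPSget, if_neg hki, if_neg hks]; exact hk⟩
      have hospQW : IsOSP n QW := by
        apply osp_of_getD
        · intro k l hkl
          rw [hQWget, hQWget]
          split_ifs with h1 h2 h3 h4 h5 h6 h7 h8 <;>
            first
            | omega
            | exact Finset.disjoint_sdiff
            | exact Finset.disjoint_sdiff.symm
            | exact (Finset.disjoint_of_subset_left (Finset.sdiff_subset) (hdisjV _ (by omega) (by omega)))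
            | exact (Finset.disjoint_of_subset_right (Finset.sdiff_subset) (hdisjV _ (by omega) (by omega))).symm
            | exact Finset.disjoint_of_subset_left hWV (hdisjV _ (by omega) (by omega))
            | exact (Finset.disjoint_of_subset_left hWV (hdisjV _ (by omega) (by omega))).symm
            | exact (Finset.disjoint_of_subset_left (Finset.sdiff_subset) (hdisjV _ (by omega) (by omega))).symm
            | exact osp_disjoint hQ hkl
        · intro k hk
          rw [hQWget]
          split_ifs with h1 h2
          · exact hWne
          · exact hVWne
          · apply hQ.2.1
            have hklen : k < Q.length := by
              rcases hcase with ⟨hs, hl⟩ | ⟨hs, hl⟩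
              · rw [hQWlen, hl, List.length_set, List.length_set, ← hQlen] at hk
                exact hk
              · rw [hQWlen, hl, List.length_append, List.length_set, ← hQlen] at hk
                simp at hk
                rcases Nat.lt_or_ge k Q.length with h | h
                · exact h
                · exfalso; rw [hQlen] at h; omega
            rw [List.getD_eq_getElem _ _ hklen]
            exact List.getElem_mem hklen
        · intro x
          have hx : x ∈ Q.foldr (· ∪ ·) ∅ := by rw [hQ.2.2]; exact Finset.mem_univ x
          rw [mem_foldr_union] at hx
          obtain ⟨k, hk⟩ := hx
          by_cases hki : k = i
          · rw [hki] at hk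
            have hxV : x ∈ V := Finset.mem_union_left _ hk
            by_cases hxW : x ∈ W
            · exact ⟨i, by rw [hQWget, if_pos rfl]; exact hxW⟩
            · refine ⟨s, ?_⟩
              rw [hQWget, if_neg (by omega), if_pos rfl]
              exact Finset.mem_sdiff.2 ⟨hxV, hxW⟩
          by_cases hks : k = s
          · rw [hks] at hk
            have hxV : x ∈ V := Finset.mem_union_right _ hk
            by_cases hxW : x ∈ W
            · exact ⟨i, by rw [hQWget, if_pos rfl]; exact hxW⟩
            · refine ⟨s, ?_⟩
              rw [hQWget, if_neg (by omega), if_pos rfl]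
              exact Finset.mem_sdiff.2 ⟨hxV, hxW⟩
          · exact ⟨k, by rw [hQWget, if_neg hki, if_neg hks]; exact hk⟩
      have hcount := hr PS QW hospPS hospQW hPSshape hQWshape
      have hsetEq : {g ∈ D | MapsOSP g PS QW} =
          ↑(G0.filter (fun g : Equiv.Perm (Fin n) => S.image ⇑g = W)) := by
        ext g
        constructor
        · rintro ⟨hgD, hmaps⟩
          rw [Finset.mem_coe, Finset.mem_filter, hmemG0]
          rw [mapsOSP_iff_getD] at hmaps
          obtain ⟨hlen, hget⟩ := hmaps
          have hSW : S.image ⇑g = W := by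
            have := hget i
            rwa [hPSget, hQWget, if_pos rfl, if_pos rfl] at this
          refine ⟨⟨hgD, fun k hki hks => ?_⟩, hSW⟩
          have := hget k
          rwa [hPSget, hQWget, if_neg hki, if_neg hks, if_neg hki, if_neg hks] at this
        · intro hg
          rw [Finset.mem_coe, Finset.mem_filter, hmemG0] at hg
          obtain ⟨⟨hgD, hgblocks⟩, hSW⟩ := hg
          refine ⟨hgD, ?_⟩
          rw [mapsOSP_iff_getD]
          refine ⟨by rw [hPSlen, hQWlen], fun k => ?_⟩
          rw [hPSget, hQWget]
          have hgG0 : g ∈ G0 := (hmemG0 g).2 ⟨hgD, hgblocks⟩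
          by_cases hki : k = i
          · rw [if_pos hki, if_pos hki]; exact hSW
          by_cases hks : k = s
          · rw [if_neg hki, if_pos hks, if_neg hki, if_pos hks]
            rw [Finset.image_sdiff _ _ g.injective, hmap g hgG0, hSW]
          · rw [if_neg hki, if_neg hks, if_neg hki, if_neg hks]
            exact hgblocks k hki hks
      rw [hsetEq, Set.ncard_coe_finset] at hcount
      exact hcount
    -- identify the count for (P, Q) with the filtered count
    have hPsbEq : Psb = U \ Pi := by
      rw [hU, Finset.union_sdiff_cancel_left hdisjP]
    have hQsbEq : Qsb = V \ Qi := by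
      rw [hV, Finset.union_sdiff_cancel_left hdisjQ]
    have hmainEq : {g ∈ D | MapsOSP g P Q} =
        ↑(G0.filter (fun g : Equiv.Perm (Fin n) => Pi.image ⇑g = Qi)) := by
      ext g
      constructor
      · rintro ⟨hgD, hmaps⟩
        rw [Finset.mem_coe, Finset.mem_filter, hmemG0]
        rw [mapsOSP_iff_getD] at hmaps
        obtain ⟨hlen, hget⟩ := hmaps
        exact ⟨⟨hgD, fun k hki hks => hget k⟩, hget i⟩
      · intro hg
        rw [Finset.mem_coe, Finset.mem_filter, hmemG0] at hg
        obtain ⟨⟨hgD, hgblocks⟩, hPiQi⟩ := hg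
        refine ⟨hgD, ?_⟩
        rw [mapsOSP_iff_getD]
        refine ⟨by rw [hPlen, hQlen], fun k => ?_⟩
        have hgG0 : g ∈ G0 := (hmemG0 g).2 ⟨hgD, hgblocks⟩
        by_cases hki : k = i
        · subst hki; exact hPiQi
        by_cases hks : k = s
        · subst hks
          show Psb.image ⇑g = Qsb
          rw [hPsbEq, hQsbEq, Finset.image_sdiff _ _ g.injective, hmap g hgG0, hPiQi]
        · exact hgblocks k hki hks
    have hcore := core G0 U V (p + 1) (by rw [hUcard, hVcard]) (by omega)
      (by omega) (by omega) hmap r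
      (fun S hSU W hWV hSc hWc => hrS S hSU W hWV (by simpa using hSc) (by simpa using hWc))
      Pi (Finset.subset_union_left) Qi (Finset.subset_union_left)
      hPicard hQicard
    rw [hmainEq, Set.ncard_coe_finset]
    have harith : U.card - (p + 1) + 1 = q + 1 := by rw [hUcard]; omega
    rw [harith] at hcore
    exact hcore
  -- conclude
  by_cases hex : ∃ P0 : List (Finset (Fin n)), IsOSP n P0 ∧ P0.map Finset.card = mu
  · obtain ⟨P0, hP0, hP0s⟩ := hex
    refine ⟨{g ∈ D | MapsOSP g P0 P0}.ncard, fun P Q hP hQ hPs hQs => ?_⟩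
    have h1 := key P Q hP hQ hPs hQs
    have h2 := key P0 P0 hP0 hP0 hP0s hP0s
    have := h1.trans h2.symm
    exact Nat.eq_of_mul_eq_mul_left (by omega) this
  · exact ⟨0, fun P Q hP hQ hPs hQs => absurd ⟨P, hP, hPs⟩ hex⟩

end Step

section Chain

variable {n : ℕ}

lemma psucc (l : List ℕ) (j : ℕ) :
    (l.take (j+1)).sum = (l.take j).sum + l.getD j 0 := by
  rcases Nat.lt_or_ge j l.length with h | h
  · rw [List.sum_take_succ _ _ h, List.getD_eq_getElem _ _ h]
  · rw [List.take_of_length_le h, List.take_of_length_le (by omega),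
      List.getD_eq_default _ _ h]
    simp

lemma ps_le_sum (l : List ℕ) (j : ℕ) : (l.take j).sum ≤ l.sum := by
  conv_rhs => rw [← List.take_append_drop j l]
  rw [List.sum_append]
  exact Nat.le_add_right _ _

lemma ps_full (l : List ℕ) {j : ℕ} (h : l.length ≤ j) : (l.take j).sum = l.sum := by
  rw [List.take_of_length_le h]

lemma length_le_sum (l : List ℕ) (h : ∀ x ∈ l, 0 < x) : l.length ≤ l.sum := by
  induction l with
  | nil => simp
  | cons a t ih =>
    simp only [List.length_cons, List.sum_cons]
    have ha : 0 < a := h a (List.mem_cons_self)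
    have := ih (fun x hx => h x (List.mem_cons_of_mem a hx))
    omega

lemma part_ext {lam mu : List ℕ} (hl : IsPartition n lam) (hm : IsPartition n mu)
    (h : ∀ k, lam.getD k 0 = mu.getD k 0) : lam = mu := by
  have hlen : lam.length = mu.length := by
    by_contra hne
    rcases Nat.lt_or_ge lam.length mu.length with hc | hc
    · have h1 := h lam.length
      rw [List.getD_eq_default _ _ le_rfl] at h1
      have := partition_pos hm hc
      omega
    · have hc' : mu.length < lam.length := by omega
      have h1 := h mu.length
      rw [List.getD_eq_default mu _ le_rfl] at h1
      have := partition_pos hl hc'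
      omega
  exact List.ext_getElem hlen fun k h1 h2 => by
    have := h k
    rwa [List.getD_eq_getElem _ _ h1, List.getD_eq_getElem _ _ h2] at this

lemma sorted_of_adj {l : List ℕ} (h : ∀ j, j + 1 < l.length → l.getD (j+1) 0 ≤ l.getD j 0) :
    l.Pairwise (· ≥ ·) := by
  rw [← List.isChain_iff_pairwise]
  rw [List.isChain_iff_getElem]
  intro j hj
  have hj' : j + 1 < l.length := by omega
  have := h j hj'
  rw [List.getD_eq_getElem _ _ hj', List.getD_eq_getElem _ _ (by omega)] at this
  simpa using this

lemma chain (D : Set (Equiv.Perm (Fin n))) :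
    ∀ d : ℕ, ∀ lam mu : List ℕ, IsPartition n lam → IsPartition n mu → Dominated lam mu →
      (∑ j ∈ Finset.range (n+1), ((mu.take j).sum - (lam.take j).sum)) ≤ d →
      IsLamTransSet D lam → IsLamTransSet D mu := by
  intro d
  induction d with
  | zero =>
    intro lam mu hlam hmu hdom hmd hDl
    have hlamlen : lam.length ≤ n := by
      have := length_le_sum lam hlam.2.1; rw [hlam.2.2] at this; exact this
    have hmulen : mu.length ≤ n := by
      have := length_le_sum mu hmu.2.1; rw [hmu.2.2] at this; exact this
    have hzero : ∀ j ∈ Finset.range (n+1), (mu.take j).sum - (lam.take j).sum = 0 :=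
      fun j hj => Nat.eq_zero_of_le_zero (le_trans (Finset.single_le_sum
        (f := fun j => (mu.take j).sum - (lam.take j).sum) (fun _ _ => Nat.zero_le _) hj) hmd)
    have hpseq : ∀ j, (lam.take j).sum = (mu.take j).sum := by
      intro j
      rcases Nat.lt_or_ge j (n+1) with hj | hj
      · have h1 := hzero j (Finset.mem_range.2 hj)
        have h2 := hdom j
        omega
      · rw [ps_full lam (by omega), ps_full mu (by omega), hlam.2.2, hmu.2.2]
    have hent : ∀ k, lam.getD k 0 = mu.getD k 0 := by
      intro k
      have h1 := psucc lam k
      have h2 := psucc mu k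
      have h3 := hpseq k
      have h4 := hpseq (k+1)
      omega
    rw [part_ext hlam hmu hent] at hDl
    exact hDl
  | succ d ih =>
    intro lam mu hlam hmu hdom hmd hDl
    by_cases heq : lam = mu
    · rw [heq] at hDl; exact hDl
    have hlamlen : lam.length ≤ n := by
      have := length_le_sum lam hlam.2.1; rw [hlam.2.2] at this; exact this
    have hmulen : mu.length ≤ n := by
      have := length_le_sum mu hmu.2.1; rw [hmu.2.2] at this; exact this
    -- find first differing index i
    have hex : ∃ k, lam.getD k 0 ≠ mu.getD k 0 := by
      by_contra hno
      push_neg at hno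
      exact heq (part_ext hlam hmu hno)
    classical
    set i := Nat.find hex with hidef
    have hi_ne : lam.getD i 0 ≠ mu.getD i 0 := Nat.find_spec hex
    have hi_lt : ∀ k, k < i → lam.getD k 0 = mu.getD k 0 := by
      intro k hk
      by_contra hne
      have := Nat.find_min' hex hne
      omega
    have hpseqi : ∀ j, j ≤ i → (lam.take j).sum = (mu.take j).sum := by
      intro j hj
      induction j with
      | zero => simp
      | succ j ihj =>
        rw [psucc, psucc, ihj (by omega), hi_lt j (by omega)]
    have hei : lam.getD i 0 < mu.getD i 0 := by
      have h1 := hdom (i+1)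
      have h2 := psucc lam i
      have h3 := psucc mu i
      have h4 := hpseqi i le_rfl
      omega
    have hilt : i < lam.length := by
      have hile : i ≤ lam.length := by
        by_contra hc
        push_neg at hc
        have h1 := hi_lt lam.length hc
        rw [List.getD_eq_default _ _ le_rfl] at h1
        have h2 : mu.getD i 0 ≤ mu.getD lam.length 0 := sorted_getD_mono hmu.1 (by omega)
        omega
      rcases Nat.lt_or_ge i lam.length with h | h
      · exact h
      · exfalso
        have hieq : i = lam.length := by omega
        have h1 : (lam.take (i+1)).sum = n := by
          rw [ps_full lam (by omega), hlam.2.2]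
        have h2 : (mu.take (i+1)).sum ≤ n := by
          have := ps_le_sum mu (i+1); rw [hmu.2.2] at this; exact this
        have h3 := psucc lam i
        have h4 := psucc mu i
        have h5 := hpseqi i le_rfl
        have h6 : lam.getD i 0 = 0 := List.getD_eq_default _ _ (by omega)
        omega
    -- i is not the last index either
    have hilt2 : i + 1 < lam.length := by
      rcases Nat.lt_or_ge (i+1) lam.length with h | h
      · exact h
      · exfalso
        have h1 : (lam.take (i+1)).sum = n := by
          rw [ps_full lam (by omega), hlam.2.2]
        have h2 : (mu.take (i+1)).sum ≤ n := by
          have := ps_le_sum mu (i+1); rw [hmu.2.2] at this; exact this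
        have h3 := psucc lam i
        have h4 := psucc mu i
        have h5 := hpseqi i le_rfl
        omega
    -- find first equal-partial-sum index k0 > i
    have hk0ex : ∃ j, i < j ∧ (lam.take j).sum = (mu.take j).sum := by
      refine ⟨n+1, by omega, ?_⟩
      rw [ps_full lam (by omega), ps_full mu (by omega), hlam.2.2, hmu.2.2]
    set k0 := Nat.find hk0ex with hk0def
    have hk0spec : i < k0 ∧ (lam.take k0).sum = (mu.take k0).sum := Nat.find_spec hk0ex
    have hstrict : ∀ j, i < j → j < k0 → (lam.take j).sum < (mu.take j).sum := by
      intro j h1 h2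
      have h3 := hdom j
      have h4 : ¬(i < j ∧ (lam.take j).sum = (mu.take j).sum) := Nat.find_min hk0ex h2
      omega
    have hk2 : i + 1 < k0 := by
      rcases Nat.lt_or_ge (i+1) k0 with h | h
      · exact h
      · exfalso
        have h1 : k0 = i + 1 := by omega
        have h2 := hk0spec.2
        rw [h1] at h2
        have h3 := psucc lam i
        have h4 := psucc mu i
        have h5 := hpseqi i le_rfl
        omega
    -- entry comparisons near k0
    have hek0m1 : mu.getD (k0-1) 0 < lam.getD (k0-1) 0 := by
      have h0 : k0 - 1 + 1 = k0 := by omega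
      have h1 := psucc lam (k0-1)
      have h2 := psucc mu (k0-1)
      rw [h0] at h1 h2
      have h3 := hstrict (k0-1) (by omega) (by omega)
      have h4 := hk0spec.2
      omega
    have hek0 : lam.getD k0 0 ≤ mu.getD k0 0 := by
      have h1 := psucc lam k0
      have h2 := psucc mu k0
      have h3 := hdom (k0+1)
      have h4 := hk0spec.2
      omega
    -- find the first "drop" s > i of lam
    have hsex : ∃ j, i < j ∧ lam.getD (j+1) 0 < lam.getD j 0 := by
      refine ⟨lam.length - 1, by omega, ?_⟩
      rw [List.getD_eq_default _ _ (by omega)]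
      exact partition_pos hlam (by omega)
    set s := Nat.find hsex with hsdef
    have hsspec : i < s ∧ lam.getD (s+1) 0 < lam.getD s 0 := Nat.find_spec hsex
    have his : i < s := hsspec.1
    have hsmin : ∀ j, i < j → j < s → lam.getD (j+1) 0 = lam.getD j 0 := by
      intro j h1 h2
      have h3 : ¬(i < j ∧ lam.getD (j+1) 0 < lam.getD j 0) := Nat.find_min hsex h2
      have h4 : lam.getD (j+1) 0 ≤ lam.getD j 0 := sorted_getD_mono hlam.1 (by omega)
      omega
    have hsk0 : s < k0 := by
      by_contra hc
      push_neg at hc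
      -- lam is constant on [i+1, k0]
      have hconst : ∀ j, i + 1 ≤ j → j ≤ k0 → lam.getD j 0 = lam.getD (i+1) 0 := by
        intro j h1 h2
        induction j with
        | zero => omega
        | succ j ihj =>
          rcases Nat.lt_or_ge j (i+1) with h | h
          · have : j + 1 = i + 1 := by omega
            rw [this]
          · have e1 := ihj (by omega) (by omega)
            have e2 := hsmin j (by omega) (by omega)
            omega
      have e1 := hconst (k0-1) (by omega) (by omega)
      have e2 := hconst k0 (by omega) le_rfl
      have e3 : mu.getD k0 0 ≤ mu.getD (k0-1) 0 := sorted_getD_mono hmu.1 (by omega)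
      omega
    have hslen : s < lam.length := by
      by_contra hc
      push_neg at hc
      have := List.getD_eq_default lam 0 (show lam.length ≤ s from hc)
      omega
    -- the new partition nu
    have hadd : i = 0 ∨ lam.getD i 0 + 1 ≤ lam.getD (i-1) 0 := by
      rcases Nat.eq_zero_or_pos i with h | h
      · exact Or.inl h
      · right
        have h1 := hi_lt (i-1) (by omega)
        have h2 : mu.getD i 0 ≤ mu.getD (i-1) 0 := sorted_getD_mono hmu.1 (by omega)
        omega
    obtain ⟨nu, hnulen, hnuent, hnumove⟩ :
        ∃ nu : List ℕ, nu.length = (if lam.getD s 0 = 1 then s else lam.length) ∧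
          (∀ k, nu.getD k 0 = if k = i then lam.getD i 0 + 1
            else if k = s then lam.getD s 0 - 1 else lam.getD k 0) ∧
          BoxMove lam nu := by
      rcases Nat.lt_or_ge 1 (lam.getD s 0) with hbig | hsmall
      · -- type 1 move: lam.getD s 0 ≥ 2
        refine ⟨(lam.set i (lam.getD i 0 + 1)).set s (lam.getD s 0 - 1),
          by rw [List.length_set, List.length_set, if_neg (by omega)], ?_, ?_⟩
        · intro k
          rw [getD_set' _ _ _ _ _ (by rw [List.length_set]; exact hslen)]
          by_cases hks : k = s
          · rw [if_pos hks, hks, if_neg (by omega), if_pos rfl]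
          · rw [if_neg hks, getD_set' _ _ _ _ _ (by omega), if_neg hks]
        · refine ⟨i, s, lam.getD i 0, his, ?_, Or.inl ⟨?_, ?_⟩⟩
          · rw [getD_set' _ _ _ _ _ (by rw [List.length_set]; exact hslen), if_neg (by omega),
              getD_set' _ _ _ _ _ (by omega), if_pos rfl]
          · rw [List.length_set, List.length_set]; exact hslen
          · apply List.ext_getElem (by simp)
            intro k h1 h2
            rw [← List.getD_eq_getElem _ 0 h1, ← List.getD_eq_getElem _ 0 h2]
            have hgs : ((lam.set i (lam.getD i 0 + 1)).set s (lam.getD s 0 - 1)).getD s 0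
                = lam.getD s 0 - 1 := by
              rw [getD_set' _ _ _ _ _ (by rw [List.length_set]; exact hslen), if_pos rfl]
            rw [hgs]
            rw [getD_set' _ _ _ _ _ (by simp only [List.length_set]; omega)]
            by_cases hks : k = s
            · rw [if_pos hks, hks]
              omega
            · rw [if_neg hks, getD_set' _ _ _ _ _ (by simp only [List.length_set]; omega)]
              by_cases hki : k = i
              · rw [if_pos hki, hki]
              · rw [if_neg hki, getD_set' _ _ _ _ _ (by rw [List.length_set]; exact hslen),
                  if_neg hks, getD_set' _ _ _ _ _ (by omega), if_neg hki]
      · -- type 2 move: lam.getD s 0 = 1, s is the last index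
        have hs1 : lam.getD s 0 = 1 := by
          have := partition_pos hlam hslen
          omega
        have hslast : s + 1 = lam.length := by
          rcases Nat.lt_or_ge (s+1) lam.length with h | h
          · exfalso
            have := partition_pos hlam h
            omega
          · omega
        refine ⟨(lam.set i (lam.getD i 0 + 1)).take s,
          by rw [List.length_take, List.length_set, if_pos hs1]; omega, ?_, ?_⟩
        · intro k
          have hlen' : ((lam.set i (lam.getD i 0 + 1)).take s).length = s := by
            rw [List.length_take, List.length_set]; omega
          rcases Nat.lt_or_ge k s with hk | hk
          · rw [getD_take _ _ _ _ hk, getD_set' _ _ _ _ _ (by omega)]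
            by_cases hki : k = i
            · rw [if_pos hki, if_pos hki]
            · rw [if_neg hki, if_neg hki, if_neg (by omega)]
          · rw [List.getD_eq_default _ _ (by omega)]
            by_cases hks : k = s
            · rw [if_neg (by omega), if_pos hks]
              omega
            · rw [if_neg (by omega), if_neg hks, List.getD_eq_default _ _ (by omega)]
        · refine ⟨i, s, lam.getD i 0, his, ?_, Or.inr ⟨?_, ?_⟩⟩
          · rw [getD_take _ _ _ _ his, getD_set' _ _ _ _ _ (by omega), if_pos rfl]
          · rw [List.length_take, List.length_set]; omega
          · apply List.ext_getElem (by simp [List.length_set]; omega)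
            intro k h1 h2
            rw [← List.getD_eq_getElem _ 0 h1, ← List.getD_eq_getElem _ 0 h2]
            rw [getD_concat]
            have hlen' : (((lam.set i (lam.getD i 0 + 1)).take s).set i
                (lam.getD i 0)).length = s := by
              rw [List.length_set, List.length_take, List.length_set]; omega
            by_cases hks : k = s
            · rw [if_pos (by rw [hlen']; exact hks), hks, hs1]
            · rw [if_neg (by rw [hlen']; exact hks)]
              have hk : k < s := by
                rw [List.length_append, hlen'] at h2
                simp at h2
                omega
              rw [getD_set' _ _ _ _ _ (by rw [List.length_take, List.length_set]; omega)]
              by_cases hki : k = i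
              · rw [if_pos hki, hki]
              · rw [if_neg hki, getD_take _ _ _ _ hk, getD_set' _ _ _ _ _ (by omega),
                  if_neg hki]
    -- nu is a partition
    have hs1pos : 1 ≤ lam.getD s 0 := partition_pos hlam hslen
    have hnusorted : nu.Pairwise (· ≥ ·) := by
      apply sorted_of_adj
      intro j hj
      rw [hnuent, hnuent]
      have m1 : lam.getD (j+1) 0 ≤ lam.getD j 0 := sorted_getD_mono hlam.1 (by omega)
      have m2 : lam.getD (s+1) 0 < lam.getD s 0 := hsspec.2
      have m3 : lam.getD s 0 ≤ lam.getD (i+1) 0 := sorted_getD_mono hlam.1 (by omega)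
      split_ifs with h1 h2 h3 h4 h5 h6 h7 h8 <;> try (subst_vars; omega)
      · -- j+1 = i, j = something else
        rcases hadd with h | h
        · omega
        · have : j = i - 1 := by omega
          rw [this]
          have m4 : lam.getD (i-1) 0 ≥ lam.getD i 0 + 1 := h
          omega
      · -- j+1 = s, j ≠ i
        have m5 : lam.getD s 0 ≤ lam.getD j 0 := sorted_getD_mono hlam.1 (by omega)
        omega
    have hnupos : ∀ x ∈ nu, 0 < x := by
      intro x hx
      rw [List.mem_iff_getElem] at hx
      obtain ⟨k, hk, rfl⟩ := hx
      rw [← List.getD_eq_getElem _ 0 hk, hnuent]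
      have hknu : k < nu.length := hk
      have hklam : k < lam.length := by
        split_ifs at hnulen <;> omega
      have := partition_pos hlam hklam
      split_ifs with h1 h2
      · omega
      · -- k = s within nu: only in type-1 context; value lam.getD s 0 - 1 ≥ 1 needed
        -- since nu.getD s 0 = lam.getD s 0 - 1 and positivity requires lam.getD s 0 ≥ 2.
        -- In type 2, s ≥ nu.length so k ≠ s. We derive from sortedness instead:
        -- nu.getD k 0 with k < nu.length, but we know nothing direct; use:
        -- if lam.getD s 0 = 1, then nu.length ≤ s (type 2 construction), contradiction with k = s.
        rcases Nat.lt_or_ge 1 (lam.getD s 0) with hbig | hsmall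
        · omega
        · exfalso
          rw [if_pos (by omega)] at hnulen
          omega
      · omega
    -- partial sums of nu
    have hpsnu : ∀ j, (nu.take j).sum = if i < j ∧ j ≤ s then (lam.take j).sum + 1
        else (lam.take j).sum := by
      intro j
      induction j with
      | zero => simp
      | succ j ihj =>
        have h1 := psucc nu j
        have h2 := psucc lam j
        have h3 := hnuent j
        rcases Nat.lt_trichotomy j i with hc | hc | hc
        · rw [if_neg (by omega)] at ihj
          rw [if_neg (by omega)]
          rw [if_neg (by omega), if_neg (by omega)] at h3
          omega
        · rw [if_neg (by omega)] at ihj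
          rw [if_pos ⟨by omega, by omega⟩]
          rw [if_pos hc] at h3
          have h4 : lam.getD j 0 = lam.getD i 0 := by rw [hc]
          omega
        · rcases Nat.lt_or_ge j s with hd | hd
          · rw [if_pos ⟨hc, by omega⟩] at ihj
            rw [if_pos ⟨by omega, by omega⟩]
            rw [if_neg (by omega), if_neg (by omega)] at h3
            omega
          · rcases Nat.eq_or_lt_of_le hd with hjs | hjs
            · rw [if_pos ⟨by omega, by omega⟩] at ihj
              rw [if_neg (by omega)]
              rw [if_neg (by omega), if_pos hjs.symm] at h3
              have h4 : lam.getD j 0 = lam.getD s 0 := by rw [hjs.symm]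
              omega
            · rw [if_neg (by omega)] at ihj
              rw [if_neg (by omega)]
              rw [if_neg (by omega), if_neg (by omega)] at h3
              omega
    have hnusum : nu.sum = n := by
      have h1 := hpsnu (n+1)
      rw [if_neg (by omega)] at h1
      have h2 : nu.length ≤ n + 1 := by split_ifs at hnulen <;> omega
      rw [ps_full nu h2, ps_full lam (by omega), hlam.2.2] at h1
      exact h1
    have hnupart : IsPartition n nu := ⟨hnusorted, hnupos, hnusum⟩
    -- nu is dominated by mu
    have hnudom : Dominated nu mu := by
      intro j
      rw [hpsnu j]
      split_ifs with h1
      · have := hstrict j (by omega) (by omega)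
        omega
      · exact hdom j
    -- the measure strictly decreases
    have hmeas : (∑ j ∈ Finset.range (n+1), ((mu.take j).sum - (nu.take j).sum)) ≤ d := by
      have hlt : (∑ j ∈ Finset.range (n+1), ((mu.take j).sum - (nu.take j).sum))
          < ∑ j ∈ Finset.range (n+1), ((mu.take j).sum - (lam.take j).sum) := by
        apply Finset.sum_lt_sum
        · intro j hj
          rw [hpsnu j]
          split_ifs with h1
          · omega
          · omega
        · refine ⟨i+1, Finset.mem_range.2 (by omega), ?_⟩
          rw [hpsnu (i+1), if_pos ⟨by omega, by omega⟩]
          have := hstrict (i+1) (by omega) (by omega)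
          omega
      omega
    -- apply the single-step lemma and the induction hypothesis
    have hDnu : IsLamTransSet D nu := step lam nu hlam hnupart hnumove D hDl
    exact ih nu mu hnupart hmu hnudom hmeas hDnu

end Chain


/-- If `D ⊆ S_n` is a `λ`-transitive set and `μ ⊵ λ`, then `D` is a `μ`-transitive set. -/
theorem lamTransSet_of_dominated (n : ℕ) (hn : 2 ≤ n) (lam mu : List ℕ)
    (hlam : IsPartition n lam) (hmu : IsPartition n mu) (hdom : Dominated lam mu)
    (D : Set (Equiv.Perm (Fin n))) (hD : IsLamTransSet D lam) :
    IsLamTransSet D mu :=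
  chain D (∑ j ∈ Finset.range (n+1), ((mu.take j).sum - (lam.take j).sum))
    lam mu hlam hmu hdom le_rfl hD
end
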